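/- Let F be a field of characteristic zero, p a prime, and a ∈ F nonzero, and suppose the binomial t^p − a is irreducible in F[t]. Let E be a splitting field of t^p − a over F. Then Gal(E/F) is cyclic of order p if and only if F contains a primitive p-th root of unity. -/

import Mathlib

open Polynomial

/-- **Corollary 7.1.** Let `p` be a prime, `a ∈ F` nonzero with `t^p − a` irreducible over `F`
(characteristic zero), and let `E` be a splitting field of `t^p − a` over `F`.  Then
`Gal(E/F)` is cyclic of order `p` iff `F` contains a primitive `p`-th root of unity. -/
theorem binomial_galois_cyclic_iff_primitive_root
    (F E : Type*) [Field F] [Field E] [Algebra F E] [CharZero F]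
    (p : ℕ) (hp : p.Prime) (a : F) (ha : a ≠ 0)
    (hirr : Irreducible ((X : Polynomial F) ^ p - C a))
    [IsSplittingField F E ((X : Polynomial F) ^ p - C a)] :
    (IsCyclic (E ≃ₐ[F] E) ∧ Nat.card (E ≃ₐ[F] E) = p) ↔
      ∃ w : F, IsPrimitiveRoot w p := by
  have hp0 : 0 < p := hp.pos
  have : NeZero p := ⟨hp0.ne'⟩
  have hfd : FiniteDimensional F E :=
    IsSplittingField.finiteDimensional E ((X : Polynomial F) ^ p - C a)
  classical
  constructor
  · rintro ⟨hcyc, hcard⟩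
    -- E/F is Galois (char zero splitting field)
    have hnormal : Normal F E := Normal.of_isSplittingField ((X : Polynomial F) ^ p - C a)
    have hgal : IsGalois F E := ⟨⟩
    have hrank : Module.finrank F E = p := by
      rw [← IsGalois.card_aut_eq_finrank, hcard]
    -- the mapped polynomial splits with distinct roots
    have hsep : ((X : Polynomial F) ^ p - C a).Separable := hirr.separable
    set q : Polynomial E := ((X : Polynomial F) ^ p - C a).map (algebraMap F E) with hq
    have hsplits := IsSplittingField.splits E ((X : Polynomial F) ^ p - C a)
    have hroots_card : Multiset.card q.roots = p := by
      rw [hq, ← hsplits.natDegree_eq_card_roots, natDegree_map, natDegree_X_pow_sub_C]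
    have hnodup : q.roots.Nodup := Polynomial.nodup_roots hsep.map
    -- there exist two distinct roots
    have h2 : 1 < q.roots.toFinset.card := by
      rw [Multiset.toFinset_card_of_nodup hnodup, hroots_card]
      exact hp.one_lt
    obtain ⟨α, hαmem, β, hβmem, hne⟩ := Finset.one_lt_card.mp h2
    rw [Multiset.mem_toFinset] at hαmem hβmem
    have ha' : (algebraMap F E) a ≠ 0 := by simpa using ha
    have hαpow : α ^ p = algebraMap F E a := by
      have := (mem_roots'.mp hαmem).2
      simp only [hq, IsRoot, Polynomial.map_sub, Polynomial.map_pow, Polynomial.map_X,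
        Polynomial.map_C, eval_sub, eval_pow, eval_X, eval_C, sub_eq_zero] at this
      exact this
    have hβpow : β ^ p = algebraMap F E a := by
      have := (mem_roots'.mp hβmem).2
      simp only [hq, IsRoot, Polynomial.map_sub, Polynomial.map_pow, Polynomial.map_X,
        Polynomial.map_C, eval_sub, eval_pow, eval_X, eval_C, sub_eq_zero] at this
      exact this
    have hβ0 : β ≠ 0 := by
      intro h
      rw [h, zero_pow hp0.ne'] at hβpow
      exact ha' hβpow.symm
    -- the ratio is a primitive p-th root of unity in E
    set μ : E := α * β⁻¹ with hμdef
    have hμpow : μ ^ p = 1 := by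
      rw [hμdef, mul_pow, inv_pow, hαpow, hβpow, mul_inv_cancel₀ ha']
    have hμne : μ ≠ 1 := fun h => hne ((mul_inv_eq_one₀ hβ0).mp h)
    have hμord : orderOf μ = p := by
      rcases (Nat.dvd_prime hp).mp (orderOf_dvd_of_pow_eq_one hμpow) with h | h
      · exact absurd (orderOf_eq_one_iff.mp h) hμne
      · exact h
    have hμ : IsPrimitiveRoot μ p := hμord ▸ IsPrimitiveRoot.orderOf μ
    -- μ has degree ≤ p - 1 over F, and its degree divides p, so μ ∈ F
    have hint : IsIntegral F μ := IsIntegral.of_finite F μ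
    have hdvd : (minpoly F μ).natDegree ∣ p := hrank ▸ minpoly.degree_dvd hint
    -- μ is a root of the geometric sum ∑_{i<p} X^i of degree p-1
    set g : Polynomial F := ∑ i ∈ Finset.range p, (X : Polynomial F) ^ i with hg
    have hgmonic : g.Monic := monic_geom_sum_X hp0.ne'
    have haevalg : Polynomial.aeval μ g = 0 := by
      have h1 : (Polynomial.aeval μ g) * (μ - 1) = μ ^ p - 1 := by
        rw [hg]
        simp only [map_sum, map_pow, aeval_X]
        exact geom_sum_mul μ p
      rw [hμpow, sub_self] at h1
      rcases mul_eq_zero.mp h1 with h | h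
      · exact h
      · exact absurd (sub_eq_zero.mp h) hμne
    have hgdeg : g.natDegree ≤ p - 1 := by
      rw [hg]
      refine natDegree_sum_le_of_forall_le _ _ fun i hi => ?_
      rw [natDegree_X_pow]
      exact Nat.le_sub_one_of_lt (Finset.mem_range.mp hi)
    have hminle : (minpoly F μ).natDegree ≤ p - 1 :=
      le_trans (natDegree_le_of_dvd (minpoly.dvd F μ haevalg) hgmonic.ne_zero) hgdeg
    have hd1 : (minpoly F μ).natDegree = 1 := by
      rcases (Nat.dvd_prime hp).mp hdvd with h | h
      · exact h
      · omega
    have hmem : μ ∈ (algebraMap F E).range := by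
      rw [← minpoly.degree_eq_one_iff]
      rw [degree_eq_natDegree (minpoly.ne_zero hint), hd1, Nat.cast_one]
    obtain ⟨w, hw⟩ := hmem
    exact ⟨w, IsPrimitiveRoot.of_map_of_injective (hw ▸ hμ) (algebraMap F E).injective⟩
  · rintro ⟨w, hw⟩
    have hK : (primitiveRoots p F).Nonempty :=
      ⟨w, (mem_primitiveRoots hp0).mpr hw⟩
    have hgal : IsGalois F E := isGalois_of_isSplittingField_X_pow_sub_C hK hirr E
    refine ⟨isCyclic_of_isSplittingField_X_pow_sub_C hK hirr E, ?_⟩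
    rw [IsGalois.card_aut_eq_finrank,
      finrank_of_isSplittingField_X_pow_sub_C hK hirr E]
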